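/- Let q ∈ ℝ with q > 1 and λ ∈ ℂ. There exists a twice continuously differentiable function u : ℝ → ℂ, not identically zero on [0,1], such that u''(x) = λ² u(x) for all x ∈ [0,1], u(0) = 0, and u'(1) = q λ u(1), if and only if there exists n ∈ ℤ with λ = (1/2)·ln((q+1)/(q−1)) + i n π. -/

import Mathlib

private lemma key1 (q : ℝ) (hq : 1 < q) (lam : ℂ) :
    Complex.cosh lam = q * Complex.sinh lam ↔
      Complex.exp (2 * lam) = (((q + 1) / (q - 1) : ℝ) : ℂ) := by
  have hq1 : ((q : ℂ) - 1) ≠ 0 := by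
    simpa using sub_ne_zero.mpr (by exact_mod_cast (ne_of_gt hq) : (q:ℂ) ≠ 1)
  have ha : Complex.exp lam ≠ 0 := Complex.exp_ne_zero lam
  have hb : Complex.exp (-lam) = (Complex.exp lam)⁻¹ := by rw [Complex.exp_neg]
  have hc : Complex.cosh lam = (Complex.exp lam + Complex.exp (-lam)) / 2 := rfl
  have hs : Complex.sinh lam = (Complex.exp lam - Complex.exp (-lam)) / 2 := rfl
  have h2 : Complex.exp (2 * lam) = Complex.exp lam * Complex.exp lam := by
    rw [← Complex.exp_add]; ring_nf
  push_cast
  rw [hc, hs, h2, hb]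
  constructor
  · intro h; field_simp at h ⊢; linear_combination -h
  · intro h; field_simp at h ⊢; linear_combination -h

private lemma key2 (q : ℝ) (hq : 1 < q) (lam : ℂ) :
    Complex.exp (2 * lam) = (((q + 1) / (q - 1) : ℝ) : ℂ) ↔
      ∃ n : ℤ, lam = ((Real.log ((q + 1) / (q - 1)) : ℂ)) / 2 + (n : ℂ) * (Real.pi : ℂ) * Complex.I := by
  set r : ℝ := (q + 1) / (q - 1) with hr
  have hrpos : 0 < r := div_pos (by linarith) (by linarith)
  have hexp : Complex.exp ((Real.log r : ℂ)) = (r : ℂ) := by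
    rw [← Complex.ofReal_exp, Real.exp_log hrpos]
  rw [← hexp, Complex.exp_eq_exp_iff_exists_int]
  constructor
  · rintro ⟨n, hn⟩
    exact ⟨n, by linear_combination hn / 2⟩
  · rintro ⟨n, hn⟩
    exact ⟨n, by linear_combination 2 * hn⟩

private lemma const_aux {w : ℝ → ℂ} (hc : ContinuousOn w (Set.Icc 0 1))
    (hd : ∀ x ∈ Set.Ico (0:ℝ) 1, HasDerivAt w 0 x) :
    ∀ x ∈ Set.Icc (0:ℝ) 1, w x = w 0 :=
  constant_of_has_deriv_right_zero hc fun x hx => (hd x hx).hasDerivWithinAt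

private lemma hasDerivAt_sinh_mul (lam : ℂ) (x : ℝ) :
    HasDerivAt (fun x : ℝ => Complex.sinh (lam * x)) (lam * Complex.cosh (lam * x)) x := by
  have h1 : HasDerivAt (fun x : ℝ => lam * (x:ℂ)) lam x := by
    simpa using (Complex.ofRealCLM.hasDerivAt (x := x)).const_mul lam
  simpa [mul_comm, Function.comp_def] using (Complex.hasDerivAt_sinh (lam*x)).scomp x h1

private lemma hasDerivAt_cosh_mul (lam : ℂ) (x : ℝ) :
    HasDerivAt (fun x : ℝ => Complex.cosh (lam * x)) (lam * Complex.sinh (lam * x)) x := by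
  have h1 : HasDerivAt (fun x : ℝ => lam * (x:ℂ)) lam x := by
    simpa using (Complex.ofRealCLM.hasDerivAt (x := x)).const_mul lam
  simpa [mul_comm, Function.comp_def] using (Complex.hasDerivAt_cosh (lam*x)).scomp x h1

/-- Eigenvalue characterization (Lemma 3.1, case `q > 1`) for the anti-stable wave equation:
the boundary value problem `u'' = λ²u`, `u(0) = 0`, `u'(1) = qλu(1)` has a nontrivial solution
iff `λ = (1/2)ln((q+1)/(q−1)) + inπ` for some integer `n`. -/
theorem wave_eigenvalues_q_gt_one (q : ℝ) (hq : 1 < q) (lam : ℂ) :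
    (∃ u : ℝ → ℂ, ContDiff ℝ 2 u ∧ (¬ ∀ x ∈ Set.Icc (0:ℝ) 1, u x = 0) ∧
      (∀ x ∈ Set.Icc (0:ℝ) 1, deriv (deriv u) x = lam ^ 2 * u x) ∧
      u 0 = 0 ∧ deriv u 1 = (q : ℂ) * lam * u 1) ↔
    ∃ n : ℤ, lam = ((Real.log ((q + 1) / (q - 1)) : ℂ)) / 2 + (n : ℂ) * (Real.pi : ℂ) * Complex.I := by
  constructor
  · rintro ⟨u, hC2, hnz, hode, h0, hbc⟩
    have h2 : ContDiff ℝ ((1:ℕ∞) + 1) u := by exact_mod_cast hC2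
    have hdu1 : ContDiff ℝ 1 (deriv u) := (contDiff_succ_iff_deriv.mp h2).2.2
    have hu1 : ∀ x : ℝ, HasDerivAt u (deriv u x) x := fun x =>
      ((h2.differentiable (by norm_num)) x).hasDerivAt
    have hu2 : ∀ x : ℝ, HasDerivAt (deriv u) (deriv (deriv u) x) x := fun x =>
      ((hdu1.differentiable one_ne_zero) x).hasDerivAt
    have hcu' : Continuous (deriv u) := hdu1.continuous
    have hcu : Continuous u := hC2.continuous
    have hcsinh : Continuous (fun x : ℝ => Complex.sinh (lam * x)) := by fun_prop
    have hccosh : Continuous (fun x : ℝ => Complex.cosh (lam * x)) := by fun_prop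
    set w2 : ℝ → ℂ := fun x => deriv u x * Complex.sinh (lam * x) - lam * u x * Complex.cosh (lam * x) with hw2def
    set w1 : ℝ → ℂ := fun x => deriv u x * Complex.cosh (lam * x) - lam * u x * Complex.sinh (lam * x) with hw1def
    have hw2c : ∀ x ∈ Set.Icc (0:ℝ) 1, w2 x = 0 := by
      have hconst := const_aux (w := w2)
        (((hcu'.mul hcsinh).sub ((continuous_const.mul hcu).mul hccosh)).continuousOn)
        (by
          intro x hx
          have hx' : x ∈ Set.Icc (0:ℝ) 1 := Set.Ico_subset_Icc_self hx
          have hD : HasDerivAt w2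
              ((deriv (deriv u) x * Complex.sinh (lam * x) + deriv u x * (lam * Complex.cosh (lam * x)))
                - (lam * deriv u x * Complex.cosh (lam * x) + lam * u x * (lam * Complex.sinh (lam * x)))) x :=
            ((hu2 x).mul (hasDerivAt_sinh_mul lam x)).sub
              (((hu1 x).const_mul lam).mul (hasDerivAt_cosh_mul lam x))
          have hz : (deriv (deriv u) x * Complex.sinh (lam * x) + deriv u x * (lam * Complex.cosh (lam * x)))
                - (lam * deriv u x * Complex.cosh (lam * x) + lam * u x * (lam * Complex.sinh (lam * x))) = 0 := by
            rw [hode x hx']; ring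
          rwa [hz] at hD)
      intro x hx
      have h00 : w2 0 = 0 := by simp [hw2def, h0]
      rw [hconst x hx, h00]
    by_cases hlam : lam = 0
    · exfalso
      subst hlam
      have hd1 : ∀ x ∈ Set.Icc (0:ℝ) 1, deriv u x = deriv u 0 :=
        const_aux hcu'.continuousOn (by
          intro x hx
          have h := hu2 x
          rwa [hode x (Set.Ico_subset_Icc_self hx),
            (by ring : ((0:ℂ))^2 * u x = 0)] at h)
      have hd10 : deriv u 0 = 0 := by
        have h := hd1 1 (by norm_num)
        simp only [zero_mul, mul_zero] at hbc
        rw [hbc] at h; exact h.symm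
      have hu0 : ∀ x ∈ Set.Icc (0:ℝ) 1, u x = 0 := by
        have h := const_aux hcu.continuousOn (by
          intro x hx
          have h := hu1 x
          rwa [hd1 x (Set.Ico_subset_Icc_self hx), hd10] at h)
        intro x hx; rw [h x hx, h0]
      exact hnz hu0
    · have hu1ne : u 1 ≠ 0 := by
        intro hu10
        have hbc0 : deriv u 1 = 0 := by rw [hbc, hu10]; ring
        have hw1c : ∀ x ∈ Set.Icc (0:ℝ) 1, w1 x = w1 0 :=
          const_aux (((hcu'.mul hccosh).sub ((continuous_const.mul hcu).mul hcsinh)).continuousOn)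
            (by
              intro x hx
              have hx' : x ∈ Set.Icc (0:ℝ) 1 := Set.Ico_subset_Icc_self hx
              have hD : HasDerivAt w1
                  ((deriv (deriv u) x * Complex.cosh (lam * x) + deriv u x * (lam * Complex.sinh (lam * x)))
                    - (lam * deriv u x * Complex.sinh (lam * x) + lam * u x * (lam * Complex.cosh (lam * x)))) x :=
                ((hu2 x).mul (hasDerivAt_cosh_mul lam x)).sub
                  (((hu1 x).const_mul lam).mul (hasDerivAt_sinh_mul lam x))
              have hz : (deriv (deriv u) x * Complex.cosh (lam * x) + deriv u x * (lam * Complex.sinh (lam * x)))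
                    - (lam * deriv u x * Complex.sinh (lam * x) + lam * u x * (lam * Complex.cosh (lam * x))) = 0 := by
                rw [hode x hx']; ring
              rwa [hz] at hD)
        have hw10 : w1 0 = 0 := by
          rw [← hw1c 1 (by norm_num), hw1def]
          simp [hu10, hbc0]
        apply hnz
        intro x hx
        have hA : w2 x = 0 := hw2c x hx
        have hB : w1 x = 0 := by rw [hw1c x hx, hw10]
        rw [hw2def] at hA
        rw [hw1def] at hB
        have hlu : lam * u x = 0 := by
          linear_combination Complex.sinh (lam*(x:ℂ)) * hB - Complex.cosh (lam*(x:ℂ)) * hA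
            - (lam * u x) * Complex.cosh_sq_sub_sinh_sq (lam*(x:ℂ))
        exact (mul_eq_zero.mp hlu).resolve_left hlam
      have hw21 : w2 1 = 0 := hw2c 1 (by norm_num)
      rw [hw2def] at hw21
      simp only [Complex.ofReal_one, mul_one] at hw21
      have hcq : Complex.cosh lam = q * Complex.sinh lam := by
        apply mul_left_cancel₀ (mul_ne_zero hlam hu1ne)
        linear_combination Complex.sinh lam * hbc - hw21
      exact (key2 q hq lam).mp ((key1 q hq lam).mp hcq)
  · rintro ⟨n, hn⟩
    have hexp : Complex.exp (2 * lam) = (((q + 1) / (q - 1) : ℝ) : ℂ) :=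
      (key2 q hq lam).mpr ⟨n, hn⟩
    have hcq : Complex.cosh lam = q * Complex.sinh lam := (key1 q hq lam).mpr hexp
    have hr1 : (1:ℝ) < (q + 1) / (q - 1) := by
      rw [lt_div_iff₀ (by linarith)]; linarith
    have hsne : Complex.sinh lam ≠ 0 := by
      intro hs
      have h1 : Complex.exp lam = Complex.exp (-lam) := by
        rw [← Complex.cosh_add_sinh, ← Complex.cosh_sub_sinh, hs]; ring
      have h2 : Complex.exp (2 * lam) = 1 := by
        calc Complex.exp (2*lam) = Complex.exp lam * Complex.exp lam := by
              rw [← Complex.exp_add]; ring_nf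
          _ = Complex.exp lam * Complex.exp (-lam) := by rw [h1]
          _ = 1 := by rw [← Complex.exp_add]; simp
      rw [hexp] at h2
      have : ((q + 1) / (q - 1) : ℝ) = 1 := by exact_mod_cast h2
      linarith
    refine ⟨fun x : ℝ => Complex.sinh (lam * x), ?_, ?_, ?_, ?_, ?_⟩
    · exact (Complex.contDiff_sinh.restrict_scalars ℝ).comp
        (contDiff_const.mul Complex.ofRealCLM.contDiff)
    · intro h
      exact hsne (by simpa using h 1 (by norm_num))
    · have hderiv : deriv (fun x : ℝ => Complex.sinh (lam * x))
          = fun x : ℝ => lam * Complex.cosh (lam * x) :=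
        funext fun x => (hasDerivAt_sinh_mul lam x).deriv
      intro x hx
      rw [hderiv, ((hasDerivAt_cosh_mul lam x).const_mul lam).deriv]
      ring
    · simp
    · have hderiv : deriv (fun x : ℝ => Complex.sinh (lam * x))
          = fun x : ℝ => lam * Complex.cosh (lam * x) :=
        funext fun x => (hasDerivAt_sinh_mul lam x).deriv
      rw [hderiv]
      simp only [Complex.ofReal_one, mul_one]
      rw [hcq]; ring
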